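/- For all integers m ≥ n ≥ 1, there exist a network traffic log L of m packets, a signature S of n packets, and a tolerance vector ε of n−1 positive reals such that the set of ε-valid matches of S in L is exactly the set of all strictly increasing index sequences l[1] < … < l[n] with values in {1, …, m}; consequently the number of ε-valid matches of S in L equals the binomial coefficient C(m, n). (One such construction: all base packets equal to a fixed element b of B, log timestamps p_i.t = i, signature timestamps q_j.t = j, and tolerances ε_j = m for all j.) -/

import Mathlib

structure Packet (B : Type*) where
  t : ℝ
  b : B

def ValidPair {B : Type*} (δ : ℝ) (p' p'' q' q'' : Packet B) : Prop :=
  p'.b = q'.b ∧ p''.b = q''.b ∧ |(p''.t - p'.t) - (q''.t - q'.t)| ≤ δ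

def StrictTimes {B : Type*} (m : ℕ) (L : ℕ → Packet B) : Prop :=
  ∀ i i', 1 ≤ i → i < i' → i' ≤ m → (L i).t < (L i').t

def IsMatch {B : Type*} (m n : ℕ) (L Q : ℕ → Packet B) (ε : ℕ → ℝ) (l : ℕ → ℕ) : Prop :=
  (∀ j, 1 ≤ j → j ≤ n → 1 ≤ l j ∧ l j ≤ m) ∧
  (∀ j, 1 ≤ j → j + 1 ≤ n → l j < l (j + 1)) ∧
  (∀ j, 1 ≤ j → j + 1 ≤ n →
    ValidPair (ε j) (L (l j)) (L (l (j + 1))) (Q j) (Q (j + 1)))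

def InV {B : Type*} (m : ℕ) (L Q : ℕ → Packet B) (ε : ℕ → ℝ) : ℕ → ℕ → Prop
  | _, 0 => False
  | i, 1 => 1 ≤ i ∧ i ≤ m ∧ (L i).b = (Q 1).b
  | i, (j + 2) => 1 ≤ i ∧ i ≤ m ∧ ∃ k, k < i ∧ InV m L Q ε k (j + 1) ∧
      ValidPair (ε (j + 1)) (L k) (L i) (Q (j + 1)) (Q (j + 2))

def InE {B : Type*} (m : ℕ) (L Q : ℕ → Packet B) (ε : ℕ → ℝ) (v w : ℕ × ℕ) : Prop :=
  v.2 = w.2 + 1 ∧ w.1 < v.1 ∧ v.1 ≤ m ∧ InV m L Q ε w.1 w.2 ∧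
    ValidPair (ε w.2) (L w.1) (L v.1) (Q w.2) (Q v.2)

theorem all_increasing_sequences_matchable {B : Type*} [Nonempty B]
    (m n : ℕ) (hn : 1 ≤ n) (hnm : n ≤ m) :
    ∃ (L Q : ℕ → Packet B) (ε : ℕ → ℝ),
      StrictTimes m L ∧ StrictTimes n Q ∧ (∀ j, 1 ≤ j → j + 1 ≤ n → 0 < ε j) ∧
      (∀ l : ℕ → ℕ, IsMatch m n L Q ε l ↔
        ((∀ j, 1 ≤ j → j ≤ n → 1 ≤ l j ∧ l j ≤ m) ∧
         (∀ j, 1 ≤ j → j + 1 ≤ n → l j < l (j + 1)))) ∧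
      {l : List ℕ | l.length = n ∧ IsMatch m n L Q ε (fun j => l.getD (j - 1) 0)}.ncard = m.choose n := by

  obtain ⟨b⟩ := ‹Nonempty B›
  have hm1 : 1 ≤ m := le_trans hn hnm
  refine ⟨fun i => ⟨i, b⟩, fun j => ⟨j, b⟩, fun _ => m, ?_, ?_, ?_, ?_, ?_⟩
  · intro i i' _ h _; show (i:ℝ) < (i':ℝ); exact_mod_cast h
  · intro i i' _ h _; show (i:ℝ) < (i':ℝ); exact_mod_cast h
  · intro j _ _; show (0:ℝ) < (m:ℝ); exact_mod_cast hm1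
  · intro l
    constructor
    · rintro ⟨h1, h2, _⟩; exact ⟨h1, h2⟩
    · rintro ⟨h1, h2⟩
      refine ⟨h1, h2, ?_⟩
      intro j hj hj1
      refine ⟨rfl, rfl, ?_⟩
      have hlo := (h1 j hj (by omega)).1
      have hhi := (h1 (j+1) (by omega) hj1).2
      have hlt := h2 j hj hj1
      have hlt' : (l j : ℝ) + 1 ≤ (l (j+1) : ℝ) := by exact_mod_cast hlt
      have hm' : (1:ℝ) ≤ (m:ℝ) := by exact_mod_cast hm1
      have h1' : (1:ℝ) ≤ (l j : ℝ) := by exact_mod_cast hlo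
      have h2' : ((l (j+1) : ℝ)) ≤ (m:ℝ) := by exact_mod_cast hhi
      rw [abs_le]
      push_cast
      constructor <;> linarith
  · -- cardinality
    classical
    have hset : {l : List ℕ | l.length = n ∧ IsMatch m n (fun i => (⟨(i:ℝ), b⟩ : Packet B))
          (fun j => (⟨(j:ℝ), b⟩ : Packet B)) (fun _ => (m:ℝ)) (fun j => l.getD (j - 1) 0)} =
        ↑(((Finset.Icc 1 m).powersetCard n).image fun s => s.sort (· ≤ ·)) := by
      ext l
      simp only [Set.mem_setOf_eq, Finset.coe_image, Set.mem_image, Finset.mem_coe,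
        Finset.mem_powersetCard]
      constructor
      · rintro ⟨hlen, h1, h2, _⟩
        have hsorted : l.Pairwise (· < ·) := by
          rw [← List.isChain_iff_pairwise, List.isChain_iff_getElem]
          intro i hi
          have := h2 (i + 1) (by omega) (by omega)
          simp only [Nat.add_sub_cancel] at this
          rwa [List.getD_eq_getElem _ _ (by omega), List.getD_eq_getElem _ _ (by omega)] at this
        have hnodup : l.Nodup := hsorted.nodup
        refine ⟨l.toFinset, ⟨?_, ?_⟩, ?_⟩
        · intro x hx
          rw [List.mem_toFinset] at hx
          obtain ⟨i, hi, rfl⟩ := List.mem_iff_getElem.mp hx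
          have := h1 (i + 1) (by omega) (by omega)
          simp only [Nat.add_sub_cancel] at this
          rw [List.getD_eq_getElem _ _ (by omega)] at this
          exact Finset.mem_Icc.mpr this
        · rw [List.toFinset_card_of_nodup hnodup, hlen]
        · exact (List.toFinset_sort _ hnodup).mpr (hsorted.imp le_of_lt)
      · rintro ⟨s, ⟨hsub, hcard⟩, rfl⟩
        have hlen : (s.sort (· ≤ ·)).length = n := by rw [Finset.length_sort, hcard]
        have hsorted : (s.sort (· ≤ ·)).Pairwise (· < ·) := (Finset.sortedLT_sort s).pairwise
        have hmemIcc : ∀ i (hi : i < n), 1 ≤ (s.sort (· ≤ ·))[i]'(by omega) ∧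
            (s.sort (· ≤ ·))[i]'(by omega) ≤ m := by
          intro i hi
          have : (s.sort (· ≤ ·))[i]'(by omega) ∈ s := by
            rw [← Finset.mem_sort (· ≤ ·)]
            exact List.getElem_mem _
          exact Finset.mem_Icc.mp (hsub this)
        have hget : ∀ i (hi : i < n - 1), (s.sort (· ≤ ·))[i]'(by omega) <
            (s.sort (· ≤ ·))[i+1]'(by omega) := by
          rw [← List.isChain_iff_pairwise, List.isChain_iff_getElem] at hsorted
          intro i hi
          exact hsorted i (by omega)
        refine ⟨hlen, ?_, ?_, ?_⟩
        · intro j hj hjn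
          dsimp only
          rw [List.getD_eq_getElem _ _ (by omega)]
          exact hmemIcc (j - 1) (by omega)
        · intro j hj hjn
          dsimp only
          rw [List.getD_eq_getElem _ _ (by omega), List.getD_eq_getElem _ _ (by omega)]
          have := hget (j - 1) (by omega)
          convert this using 2 <;> omega
        · intro j hj hjn
          refine ⟨rfl, rfl, ?_⟩
          dsimp only
          rw [List.getD_eq_getElem _ _ (by omega), List.getD_eq_getElem _ _ (by omega)]
          have hlt : (s.sort (· ≤ ·))[j-1]'(by omega) < (s.sort (· ≤ ·))[j]'(by omega) := by
            have h := hget (j - 1) (by omega)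
            convert h using 2
            omega
          have ha := (hmemIcc (j - 1) (by omega)).1
          have hb := (hmemIcc j (by omega)).2
          have hm' : (1:ℝ) ≤ (m:ℝ) := by exact_mod_cast hm1
          have hlt' : (((s.sort (· ≤ ·))[j-1]'(by omega) : ℕ) : ℝ) + 1 ≤
              (((s.sort (· ≤ ·))[j]'(by omega) : ℕ) : ℝ) := by exact_mod_cast hlt
          have hx1 : (1:ℝ) ≤ (((s.sort (· ≤ ·))[j-1]'(by omega) : ℕ) : ℝ) := by exact_mod_cast ha
          have hym : (((s.sort (· ≤ ·))[j]'(by omega) : ℕ) : ℝ) ≤ (m:ℝ) := by exact_mod_cast hb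
          rw [abs_le]
          push_cast
          constructor <;> linarith
    rw [hset, Set.ncard_coe_finset]
    rw [Finset.card_image_of_injOn, Finset.card_powersetCard, Nat.card_Icc]
    · simp
    · intro s hs t ht hst
      dsimp only at hst
      have := congrArg List.toFinset hst
      rwa [Finset.sort_toFinset, Finset.sort_toFinset] at this
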